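/- Let a ≤ 0. With ε_f(t) = a∫₀ᵗ e^{a(t-v)} f(v)(1+e^{2av}) dv and τ_{f,g}(t) = (1/2)∫₀ᵗ (2f(s)g(s) + f(s)ε_g(s) + ε_f(s)g(s)) ds, one has for all t ≥ 0: a·τ_{f,1}(t) = (1/2)·ε_f(t) and a·τ_{1,1}(t) = (1/2)(e^{2at} − 1), where 1 denotes the constant function equal to 1. -/

import Mathlib

open MeasureTheory Real

/-- ε_f(t) = a ∫₀ᵗ e^{a(t-v)} f(v)(1+e^{2av}) dv. -/
noncomputable def epsTransform (a : ℝ) (f : ℝ → ℝ) : ℝ → ℝ := fun t =>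
  a * ∫ v in (0:ℝ)..t, Real.exp (a * (t - v)) * f v * (1 + Real.exp (2 * a * v))

/-- τ_{f,g}(t) = (1/2) ∫₀ᵗ (2 f g + f ε_g + ε_f g) ds. -/
noncomputable def tauTransform (a : ℝ) (f g : ℝ → ℝ) : ℝ → ℝ := fun t =>
  (1 / 2) * ∫ s in (0:ℝ)..t,
    (2 * f s * g s + f s * epsTransform a g s + epsTransform a f s * g s)

private lemma hasDerivAt_exp_lin (c x : ℝ) :
    HasDerivAt (fun y => Real.exp (c * y)) (c * Real.exp (c * x)) x := by
  simpa [mul_comm] using ((hasDerivAt_id x).const_mul c).exp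

private lemma li_ii {F : ℝ → ℝ} (hF : MeasureTheory.LocallyIntegrable F) (c d : ℝ) :
    IntervalIntegrable F volume c d := by
  rw [intervalIntegrable_iff]
  exact (hF.integrableOn_isCompact isCompact_uIcc).mono_set Set.Ioc_subset_Icc_self

private lemma eps_one (a t : ℝ) :
    epsTransform a (fun _ => 1) t = Real.exp (2 * a * t) - 1 := by
  have hd : ∀ v ∈ Set.uIcc (0:ℝ) t,
      HasDerivAt (fun v => -Real.exp (a * (t - v)) + Real.exp (a * (t + v)))
        (a * (Real.exp (a * (t - v)) * (1 + Real.exp (2 * a * v)))) v := by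
    intro v _
    have h1 : HasDerivAt (fun v : ℝ => a * (t - v)) (-a) v := by
      simpa using ((hasDerivAt_id v).const_sub t).const_mul a
    have h2 : HasDerivAt (fun v : ℝ => a * (t + v)) a v := by
      simpa using ((hasDerivAt_id v).const_add t).const_mul a
    have h3 := (h1.exp.neg).add h2.exp
    refine h3.congr_deriv ?_
    have he : Real.exp (a * (t + v)) = Real.exp (a * (t - v)) * Real.exp (2 * a * v) := by
      rw [← Real.exp_add]; ring_nf
    rw [he]; ring
  have hint : IntervalIntegrable
      (fun v => a * (Real.exp (a * (t - v)) * (1 + Real.exp (2 * a * v)))) volume 0 t := by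
    apply Continuous.intervalIntegrable; fun_prop
  unfold epsTransform
  simp only [mul_one]
  rw [← intervalIntegral.integral_const_mul,
    intervalIntegral.integral_eq_sub_of_hasDerivAt hd hint]
  have e1 : a * (t + t) = 2 * a * t := by ring
  have e2 : a * (t - t) = 0 := by ring
  have e3 : a * (t - 0) = a * t := by ring
  have e4 : a * (t + 0) = a * t := by ring
  rw [e1, e2, e3, e4, Real.exp_zero]
  ring

private lemma swap_aux (a t : ℝ) (ht : 0 ≤ t) (g : ℝ → ℝ)
    (hg : MeasureTheory.IntegrableOn g (Set.Ioc 0 t)) :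
    a * ∫ s in (0:ℝ)..t, Real.exp (a * s) * ∫ v in (0:ℝ)..s, Real.exp (-(a * v)) * g v
      = Real.exp (a * t) * (∫ v in (0:ℝ)..t, Real.exp (-(a * v)) * g v)
        - ∫ v in (0:ℝ)..t, g v := by
  set h : ℝ → ℝ := fun v => Real.exp (-(a * v)) * g v with hh_def
  have hh : MeasureTheory.IntegrableOn h (Set.Ioc 0 t) := by
    apply MeasureTheory.Integrable.mono (hg.norm.const_mul (Real.exp (|a| * t)))
    · exact ((Real.continuous_exp.comp (continuous_const.mul continuous_id).neg)
        |>.aestronglyMeasurable).mul hg.aestronglyMeasurable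
    · rw [MeasureTheory.ae_restrict_iff' measurableSet_Ioc]
      filter_upwards with v hv
      have h1 : Real.exp (-(a * v)) ≤ Real.exp (|a| * t) := by
        apply Real.exp_le_exp.mpr
        calc -(a * v) = (-a) * v := by ring
          _ ≤ |a| * v := mul_le_mul_of_nonneg_right (neg_le_abs a) hv.1.le
          _ ≤ |a| * t := mul_le_mul_of_nonneg_left hv.2 (abs_nonneg a)
      have h2 : ‖h v‖ = Real.exp (-(a * v)) * ‖g v‖ := by
        simp only [hh_def, norm_mul, Real.norm_eq_abs, Real.abs_exp]
      calc ‖h v‖ = Real.exp (-(a * v)) * ‖g v‖ := h2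
        _ ≤ Real.exp (|a| * t) * ‖g v‖ :=
            mul_le_mul_of_nonneg_right h1 (norm_nonneg _)
        _ ≤ ‖Real.exp (|a| * t) * ‖g v‖‖ := Real.le_norm_self _
  have hφ : MeasureTheory.IntegrableOn (fun s => a * Real.exp (a * s)) (Set.Ioc (0:ℝ) t) :=
    (continuous_const.mul (Real.continuous_exp.comp
      (continuous_const.mul continuous_id))).integrableOn_Ioc
  set H : ℝ × ℝ → ℝ := fun p => (a * Real.exp (a * p.1)) * h p.2 with hH_def
  set D : Set (ℝ × ℝ) := {p | p.2 ≤ p.1} with hD_def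
  have hD : MeasurableSet D := measurableSet_le measurable_snd measurable_fst
  have hHint : MeasureTheory.Integrable (D.indicator H)
      ((volume.restrict (Set.Ioc (0:ℝ) t)).prod (volume.restrict (Set.Ioc (0:ℝ) t))) :=
    (hφ.mul_prod hh).indicator hD
  have key1 : ∀ s ∈ Set.Ioc (0:ℝ) t,
      (a * Real.exp (a * s)) * (∫ v in (0:ℝ)..s, h v)
        = ∫ v in Set.Ioc (0:ℝ) t, D.indicator H (s, v) := by
    intro s hs
    have e1 : (fun v => D.indicator H (s, v))
        = Set.indicator (Set.Iic s) (fun v => H (s, v)) := by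
      funext v
      by_cases hv : v ≤ s <;>
        simp [Set.indicator_apply, hD_def, Set.mem_setOf_eq, Set.mem_Iic, hv]
    rw [e1, MeasureTheory.setIntegral_indicator measurableSet_Iic]
    have e2 : Set.Ioc (0:ℝ) t ∩ Set.Iic s = Set.Ioc 0 s := by
      ext x
      constructor
      · rintro ⟨⟨h0, _⟩, hx⟩; exact ⟨h0, hx⟩
      · rintro ⟨h0, hx⟩; exact ⟨⟨h0, hx.trans hs.2⟩, hx⟩
    rw [e2, intervalIntegral.integral_of_le hs.1.le]
    rw [show (fun v => H (s, v)) = fun v => (a * Real.exp (a * s)) * h v from rfl]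
    rw [MeasureTheory.integral_const_mul]
  have key2 : ∀ v ∈ Set.Ioc (0:ℝ) t,
      (∫ s in Set.Ioc (0:ℝ) t, D.indicator H (s, v))
        = (Real.exp (a * t) - Real.exp (a * v)) * h v := by
    intro v hv
    have e1 : (fun s => D.indicator H (s, v))
        = Set.indicator (Set.Ici v) (fun s => H (s, v)) := by
      funext s
      by_cases hs : v ≤ s <;>
        simp [Set.indicator_apply, hD_def, Set.mem_setOf_eq, Set.mem_Ici, hs]
    rw [e1, MeasureTheory.setIntegral_indicator measurableSet_Ici]
    have e2 : Set.Ioc (0:ℝ) t ∩ Set.Ici v = Set.Icc v t := by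
      ext x
      constructor
      · rintro ⟨⟨_, hx⟩, hvx⟩; exact ⟨hvx, hx⟩
      · rintro ⟨hvx, hx⟩; exact ⟨⟨lt_of_lt_of_le hv.1 hvx, hx⟩, hvx⟩
    rw [e2, MeasureTheory.integral_Icc_eq_integral_Ioc,
      ← intervalIntegral.integral_of_le hv.2]
    rw [show (fun s => H (s, v)) = fun s => (a * Real.exp (a * s)) * h v from rfl]
    rw [intervalIntegral.integral_mul_const]
    have hftc : ∫ s in v..t, a * Real.exp (a * s)
        = Real.exp (a * t) - Real.exp (a * v) := by
      apply intervalIntegral.integral_eq_sub_of_hasDerivAt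
      · intro x _; exact hasDerivAt_exp_lin a x
      · apply Continuous.intervalIntegrable; fun_prop
    rw [hftc]
  calc a * ∫ s in (0:ℝ)..t, Real.exp (a * s) * ∫ v in (0:ℝ)..s, h v
      = ∫ s in Set.Ioc (0:ℝ) t, (a * Real.exp (a * s)) * (∫ v in (0:ℝ)..s, h v) := by
        rw [intervalIntegral.integral_of_le ht, ← MeasureTheory.integral_const_mul]
        congr 1; funext s; ring
    _ = ∫ s in Set.Ioc (0:ℝ) t, ∫ v in Set.Ioc (0:ℝ) t, D.indicator H (s, v) :=
        MeasureTheory.setIntegral_congr_fun measurableSet_Ioc (fun s hs => key1 s hs)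
    _ = ∫ v in Set.Ioc (0:ℝ) t, ∫ s in Set.Ioc (0:ℝ) t, D.indicator H (s, v) :=
        MeasureTheory.integral_integral_swap hHint
    _ = ∫ v in Set.Ioc (0:ℝ) t, (Real.exp (a * t) - Real.exp (a * v)) * h v :=
        MeasureTheory.setIntegral_congr_fun measurableSet_Ioc (fun v hv => key2 v hv)
    _ = ∫ v in Set.Ioc (0:ℝ) t, (Real.exp (a * t) * h v - g v) := by
        apply MeasureTheory.integral_congr_ae
        filter_upwards with v
        have hgv : Real.exp (a * v) * h v = g v := by
          simp only [hh_def]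
          rw [← mul_assoc, ← Real.exp_add]
          simp
        rw [← hgv]; ring
    _ = Real.exp (a * t) * (∫ v in (0:ℝ)..t, h v) - ∫ v in (0:ℝ)..t, g v := by
        rw [MeasureTheory.integral_sub (hh.const_mul _) hg,
          MeasureTheory.integral_const_mul,
          intervalIntegral.integral_of_le ht, intervalIntegral.integral_of_le ht]

/-- The identities a·τ_{f,1} = ε_f/2 and a·τ_{1,1}(t) = (e^{2at} − 1)/2. -/
theorem tau_one_identities (a : ℝ) (ha : a ≤ 0) (f : ℝ → ℝ)
    (hf : MeasureTheory.LocallyIntegrable f) :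
    (∀ t : ℝ, 0 ≤ t →
      a * tauTransform a f (fun _ => 1) t = (1 / 2) * epsTransform a f t) ∧
    (∀ t : ℝ, 0 ≤ t →
      a * tauTransform a (fun _ => 1) (fun _ => 1) t
        = (1 / 2) * (Real.exp (2 * a * t) - 1)) := by
  constructor
  · intro t ht
    set g : ℝ → ℝ := fun v => f v * (1 + Real.exp (2 * a * v)) with hg_def
    have hg_ii : ∀ c d : ℝ, IntervalIntegrable g volume c d := fun c d =>
      (li_ii hf c d).mul_continuousOn (Continuous.continuousOn (by fun_prop))
    have hgint : MeasureTheory.IntegrableOn g (Set.Ioc 0 t) :=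
      (intervalIntegrable_iff_integrableOn_Ioc_of_le ht).mp (hg_ii 0 t)
    have hh_ii : ∀ c d : ℝ, IntervalIntegrable
        (fun v => Real.exp (-(a * v)) * g v) volume c d := by
      intro c d
      have e : (fun v => Real.exp (-(a * v)) * g v)
          = fun v => f v * (Real.exp (-(a * v)) * (1 + Real.exp (2 * a * v))) := by
        funext v; simp only [hg_def]; ring
      rw [e]
      exact (li_ii hf c d).mul_continuousOn (Continuous.continuousOn (by fun_prop))
    have hJcont : Continuous (fun s => ∫ v in (0:ℝ)..s, Real.exp (-(a * v)) * g v) :=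
      intervalIntegral.continuous_primitive hh_ii 0
    have heps : ∀ s, epsTransform a f s
        = a * (Real.exp (a * s) * ∫ v in (0:ℝ)..s, Real.exp (-(a * v)) * g v) := by
      intro s
      unfold epsTransform
      congr 1
      rw [← intervalIntegral.integral_const_mul]
      apply intervalIntegral.integral_congr
      intro v _
      simp only [hg_def]
      rw [show a * (s - v) = a * s + -(a * v) by ring, Real.exp_add]
      ring
    have hεcont : Continuous (epsTransform a f) := by
      have e : epsTransform a f = fun s =>
          a * (Real.exp (a * s) * ∫ v in (0:ℝ)..s, Real.exp (-(a * v)) * g v) :=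
        funext heps
      rw [e]
      exact continuous_const.mul ((Real.continuous_exp.comp
        (continuous_const.mul continuous_id)).mul hJcont)
    have htau : tauTransform a f (fun _ => 1) t
        = (1 / 2) * ((∫ s in (0:ℝ)..t, g s) + ∫ s in (0:ℝ)..t, epsTransform a f s) := by
      unfold tauTransform
      rw [← intervalIntegral.integral_add (hg_ii 0 t) (hεcont.intervalIntegrable 0 t)]
      congr 1
      apply intervalIntegral.integral_congr
      intro s _
      simp only [eps_one, hg_def]
      ring
    have hεint : (∫ s in (0:ℝ)..t, epsTransform a f s)
        = a * ∫ s in (0:ℝ)..t,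
            Real.exp (a * s) * ∫ v in (0:ℝ)..s, Real.exp (-(a * v)) * g v := by
      rw [← intervalIntegral.integral_const_mul]
      apply intervalIntegral.integral_congr
      intro s _
      simp only [heps]
    have hS := swap_aux a t ht g hgint
    rw [htau, hεint, heps t]
    linear_combination (a / 2) * hS
  · intro t ht
    have htau : tauTransform a (fun _ => 1) (fun _ => 1) t
        = (1 / 2) * ∫ s in (0:ℝ)..t, 2 * Real.exp (2 * a * s) := by
      unfold tauTransform
      congr 1
      apply intervalIntegral.integral_congr
      intro s _
      simp only [eps_one]
      ring
    have hftc : ∫ s in (0:ℝ)..t, a * Real.exp (2 * a * s)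
        = (1 / 2) * Real.exp (2 * a * t) - (1 / 2) * Real.exp (2 * a * 0) := by
      apply intervalIntegral.integral_eq_sub_of_hasDerivAt
      · intro x _
        have hx := (hasDerivAt_exp_lin (2 * a) x).const_mul (1 / 2)
        refine hx.congr_deriv ?_
        ring
      · apply Continuous.intervalIntegrable; fun_prop
    rw [htau]
    have e : a * ((1 / 2) * ∫ s in (0:ℝ)..t, 2 * Real.exp (2 * a * s))
        = ∫ s in (0:ℝ)..t, a * Real.exp (2 * a * s) := by
      rw [← intervalIntegral.integral_const_mul, ← intervalIntegral.integral_const_mul]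
      apply intervalIntegral.integral_congr
      intro s _; ring
    rw [e, hftc]
    rw [show (2:ℝ) * a * 0 = 0 by ring, Real.exp_zero]
    ring
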